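/- Let P(λ) = λ(J₁+R₁) + (J₂+R₂) be an n×n complex posH pencil such that R₁ + R₂ is positive definite, and let β > 0 be a real number. If the Hermitian matrix R₁ + R₂ + β·(iJ₁) is positive definite, then no complex number z with Re z > 0, 0 ≤ Im z < β and Im z < β·Re z belongs to the numerical range of P(λ); if the Hermitian matrix R₁ + R₂ − β·(iJ₁) is positive definite, then no complex number z with Re z > 0, −β < Im z ≤ 0 and −Im z < β·Re z belongs to the numerical range of P(λ). -/

import Mathlib

open Matrix
open scoped ComplexOrder

lemma my_star_quad {n : ℕ} (M : Matrix (Fin n) (Fin n) ℂ) (x : Fin n → ℂ) :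
    star (star x ⬝ᵥ M *ᵥ x) = star x ⬝ᵥ Mᴴ *ᵥ x := by
  rw [dotProduct_mulVec (star x) Mᴴ x, ← star_mulVec, ← star_dotProduct]

lemma core {n : ℕ} (J₁ J₂ R₁ R₂ : Matrix (Fin n) (Fin n) ℂ)
    (hJ₁ : J₁ᴴ = -J₁) (hJ₂ : J₂ᴴ = -J₂)
    (hR₁ : R₁.PosSemidef) (hR₂ : R₂.PosSemidef)
    (hsum : (R₁ + R₂).PosDef) (γ : ℝ)
    (hpos : (R₁ + R₂ + γ • (Complex.I • J₁)).PosDef)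
    (z : ℂ)
    (harith : ∀ b d t : ℝ, 0 ≤ b → 0 ≤ d → 0 < b + d → 0 < b + d - γ * t →
      0 < z.re * b - z.im * t + d)
    (x : Fin n → ℂ) (hx : x ≠ 0) :
    star x ⬝ᵥ ((z • (J₁ + R₁) + (J₂ + R₂)) *ᵥ x) ≠ 0 := by
  set q1 := star x ⬝ᵥ R₁ *ᵥ x with hq1def
  set q2 := star x ⬝ᵥ R₂ *ᵥ x with hq2def
  set p1 := star x ⬝ᵥ J₁ *ᵥ x with hp1def
  set p2 := star x ⬝ᵥ J₂ *ᵥ x with hp2def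
  have hq1 : 0 ≤ q1 := hR₁.dotProduct_mulVec_nonneg x
  have hq2 : 0 ≤ q2 := hR₂.dotProduct_mulVec_nonneg x
  have hq1im : q1.im = 0 := (Complex.nonneg_iff.mp hq1).2.symm
  have hq2im : q2.im = 0 := (Complex.nonneg_iff.mp hq2).2.symm
  have hq1re : 0 ≤ q1.re := (Complex.nonneg_iff.mp hq1).1
  have hq2re : 0 ≤ q2.re := (Complex.nonneg_iff.mp hq2).1
  -- skew parts have zero real part
  have hp1re : p1.re = 0 := by
    have := my_star_quad J₁ x
    rw [hJ₁] at this
    have h2 : star p1 = -p1 := by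
      rw [this, neg_mulVec, dotProduct_neg]
    have := congrArg Complex.re h2
    simp [Complex.star_def] at this
    linarith
  have hp2re : p2.re = 0 := by
    have := my_star_quad J₂ x
    rw [hJ₂] at this
    have h2 : star p2 = -p2 := by
      rw [this, neg_mulVec, dotProduct_neg]
    have := congrArg Complex.re h2
    simp [Complex.star_def] at this
    linarith
  -- sum positive definite
  have hbd : 0 < q1.re + q2.re := by
    have h := hsum.dotProduct_mulVec_pos hx
    rw [add_mulVec, dotProduct_add] at h
    exact (Complex.pos_iff.mp h).1
  -- the γ-shifted positive definiteness
  have hshift : 0 < q1.re + q2.re - γ * p1.im := by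
    have h := hpos.dotProduct_mulVec_pos hx
    rw [add_mulVec, add_mulVec, dotProduct_add, dotProduct_add,
      smul_mulVec, dotProduct_smul, smul_mulVec, dotProduct_smul] at h
    have := (Complex.pos_iff.mp h).1
    simpa [Complex.smul_re, hp1re] using this
  -- expand the quadratic form
  have hexp : star x ⬝ᵥ ((z • (J₁ + R₁) + (J₂ + R₂)) *ᵥ x)
      = z * (p1 + q1) + (p2 + q2) := by
    rw [add_mulVec, dotProduct_add, smul_mulVec, dotProduct_smul,
      add_mulVec, dotProduct_add, add_mulVec, dotProduct_add]
    simp [smul_eq_mul, hq1def, hq2def, hp1def, hp2def]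
  rw [hexp]
  intro hcon
  have hre := congrArg Complex.re hcon
  simp [Complex.add_re, Complex.mul_re, hp1re, hq1im, hp2re, hq2im] at hre
  have := harith q1.re q2.re p1.im hq1re hq2re hbd hshift
  linarith

lemma key_arith (b d t β zr zi : ℝ) (hb : 0 ≤ b) (hd : 0 ≤ d) (hbd : 0 < b + d)
    (h2 : 0 < b + d - β * t) (hzr : 0 < zr) (hzi : 0 ≤ zi)
    (hziβ : zi < β) (hzi2 : zi < β * zr) (hβ : 0 < β) :
    0 < zr * b - zi * t + d := by
  rcases le_or_gt t 0 with ht | ht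
  · nlinarith [mul_nonneg hzr.le hb, mul_nonneg hzi (neg_nonneg.2 ht),
      mul_pos hzr hbd]
  · rcases le_or_gt zr 1 with h1 | h1
    · nlinarith [mul_pos hzr h2, mul_lt_mul_of_pos_right hzi2 ht,
        mul_nonneg (sub_nonneg.2 h1) hd]
    · nlinarith [mul_lt_mul_of_pos_right hziβ ht, mul_nonneg (sub_nonneg.2 h1.le) hb]

/-- Theorem 4.12 (pacman-shaped exclusion region): let
`P(λ) = λ(J₁+R₁) + (J₂+R₂)` be a posH pencil with `R₁ + R₂` positive definite and
let `β > 0`. If `R₁ + R₂ + β(iJ₁) > 0`, then no `z` with `Re z > 0`,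
`0 ≤ Im z < β` and `Im z < β·Re z` belongs to the numerical range of `P(λ)`; if
`R₁ + R₂ - β(iJ₁) > 0`, then no `z` with `Re z > 0`, `-β < Im z ≤ 0` and
`-Im z < β·Re z` belongs to the numerical range of `P(λ)`. -/
theorem posH_pacman_exclusion {n : ℕ}
    (J₁ J₂ R₁ R₂ : Matrix (Fin n) (Fin n) ℂ)
    (hJ₁ : J₁ᴴ = -J₁) (hJ₂ : J₂ᴴ = -J₂)
    (hR₁ : R₁.PosSemidef) (hR₂ : R₂.PosSemidef)
    (hsum : (R₁ + R₂).PosDef) (β : ℝ) (hβ : 0 < β) :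
    ((R₁ + R₂ + β • (Complex.I • J₁)).PosDef →
      ∀ z : ℂ, 0 < z.re → 0 ≤ z.im → z.im < β → z.im < β * z.re →
        ∀ x : Fin n → ℂ, x ≠ 0 →
          star x ⬝ᵥ ((z • (J₁ + R₁) + (J₂ + R₂)) *ᵥ x) ≠ 0) ∧
    ((R₁ + R₂ - β • (Complex.I • J₁)).PosDef →
      ∀ z : ℂ, 0 < z.re → -β < z.im → z.im ≤ 0 → -z.im < β * z.re →
        ∀ x : Fin n → ℂ, x ≠ 0 →
          star x ⬝ᵥ ((z • (J₁ + R₁) + (J₂ + R₂)) *ᵥ x) ≠ 0) := by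
  constructor
  · intro hpos z hzr hzi hziβ hzi2 x hx
    exact core J₁ J₂ R₁ R₂ hJ₁ hJ₂ hR₁ hR₂ hsum β hpos z
      (fun b d t hb hd hbd hsh =>
        key_arith b d t β z.re z.im hb hd hbd hsh hzr hzi hziβ hzi2 hβ) x hx
  · intro hpos z hzr hzi hziβ hzi2 x hx
    have hpos' : (R₁ + R₂ + (-β) • (Complex.I • J₁)).PosDef := by
      rwa [neg_smul, ← sub_eq_add_neg]
    refine core J₁ J₂ R₁ R₂ hJ₁ hJ₂ hR₁ hR₂ hsum (-β) hpos' z ?_ x hx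
    intro b d t hb hd hbd hsh
    have := key_arith b d (-t) β z.re (-z.im) hb hd hbd (by linarith) hzr
      (by linarith) (by linarith) (by linarith) hβ
    nlinarith [this]
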